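/- The number x(b) = ∑_{j=0}^∞ 1/b^(2^j), for an integer b ≥ 3, is irrational. -/

import Mathlib

theorem xb_irrational (b : ℕ) (hb : 3 ≤ b) :
    Irrational (∑' j : ℕ, 1 / (b : ℝ) ^ 2 ^ j) := by
  have hb1 : (1:ℝ) < b := by
    have : (3:ℝ) ≤ b := by exact_mod_cast hb
    linarith
  have hb0 : (0:ℝ) < b := by linarith
  set f : ℕ → ℝ := fun j => 1 / (b : ℝ) ^ 2 ^ j with hf
  have hfeq : ∀ j, f j = (1/(b:ℝ)) ^ 2 ^ j := by
    intro j; simp [hf, div_pow]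
  have hr0 : (0:ℝ) ≤ 1/(b:ℝ) := by positivity
  have hr1 : (1:ℝ)/(b:ℝ) < 1 := by rw [div_lt_one hb0]; linarith
  have hfpos : ∀ j, 0 < f j := fun j => by
    have h : (0:ℝ) < (b:ℝ) ^ 2 ^ j := by positivity
    simp only [hf]; positivity
  have hfle : ∀ j, f j ≤ (1/(b:ℝ))^j := by
    intro j
    rw [hfeq]
    exact pow_le_pow_of_le_one hr0 hr1.le (Nat.lt_two_pow_self (n := j)).le
  have hgeom : Summable (fun j : ℕ => (1/(b:ℝ))^j) :=
    summable_geometric_of_lt_one hr0 hr1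
  have hsum : Summable f :=
    Summable.of_nonneg_of_le (fun j => (hfpos j).le) hfle hgeom
  intro hx
  obtain ⟨q, hq⟩ := hx
  set x : ℝ := ∑' j : ℕ, f j with hxdef
  set d : ℕ := q.den with hd
  have hdpos : 0 < d := q.pos
  -- choose m with b ^ (2^m) > 2 * d
  obtain ⟨m, hm⟩ := pow_unbounded_of_one_lt (2 * d) (show 1 < b by omega)
  have hm2 : 2 * d < b ^ 2 ^ m :=
    lt_of_lt_of_le hm (Nat.pow_le_pow_right (by omega) (Nat.lt_two_pow_self (n := m)).le)
  set M : ℕ := m + 1 with hM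
  -- split the sum
  have hsplit : (∑ j ∈ Finset.range M, f j) + (∑' j : ℕ, f (j + M)) = x :=
    Summable.sum_add_tsum_nat_add M hsum
  set S : ℝ := ∑ j ∈ Finset.range M, f j with hS
  set T : ℝ := ∑' j : ℕ, f (j + M) with hT
  have hTsum : Summable (fun j : ℕ => f (j + M)) := (summable_nat_add_iff M).mpr hsum
  have hTpos : 0 < T := by
    apply Summable.tsum_pos hTsum (fun j => (hfpos _).le) 0
    simpa using hfpos M
  -- tail bound : T ≤ 2 * (1/b)^(2^M)
  have htail_le : T ≤ 2 * (1/(b:ℝ))^(2^M) := by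
    have hle : ∀ j : ℕ, f (j + M) ≤ (1/(b:ℝ))^(2^M) * (1/(b:ℝ))^j := by
      intro j
      rw [hfeq, ← pow_add]
      apply pow_le_pow_of_le_one hr0 hr1.le
      have h1 : j + 1 ≤ 2 ^ j := Nat.lt_two_pow_self (n := j)
      have h2 : 1 ≤ 2 ^ M := Nat.one_le_two_pow
      calc 2 ^ M + j ≤ 2 ^ M + 2 ^ M * j := by nlinarith
        _ = 2 ^ M * (j + 1) := by ring
        _ ≤ 2 ^ M * 2 ^ j := Nat.mul_le_mul_left _ h1
        _ = 2 ^ (j + M) := by rw [← pow_add]; ring_nf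
    calc T ≤ ∑' j : ℕ, (1/(b:ℝ))^(2^M) * (1/(b:ℝ))^j :=
          Summable.tsum_le_tsum hle hTsum (hgeom.mul_left _)
      _ = (1/(b:ℝ))^(2^M) * (1 - 1/(b:ℝ))⁻¹ := by
          rw [tsum_mul_left, tsum_geometric_of_lt_one hr0 hr1]
      _ ≤ 2 * (1/(b:ℝ))^(2^M) := by
          rw [mul_comm]
          apply mul_le_mul_of_nonneg_right _ (by positivity)
          have h3 : (3:ℝ) ≤ b := by exact_mod_cast hb
          have hinv : (1:ℝ)/(b:ℝ) ≤ 1/3 :=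
            one_div_le_one_div_of_le (by norm_num) h3
          have hpos : (0:ℝ) < 1 - 1/(b:ℝ) := by linarith
          rw [inv_le_comm₀ hpos (by norm_num)]
          linarith
  -- key quantities
  set D : ℝ := (b:ℝ) ^ 2 ^ m with hD
  have hDpos : 0 < D := by positivity
  -- D * S is a natural number
  have hDS : D * S = ((∑ j ∈ Finset.range M, b ^ (2 ^ m - 2 ^ j) : ℕ) : ℝ) := by
    push_cast
    rw [hS, Finset.mul_sum]
    apply Finset.sum_congr rfl
    intro j hj
    have hj' : j ≤ m := by
      have := Finset.mem_range.mp hj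
      omega
    have hle : 2 ^ j ≤ 2 ^ m := Nat.pow_le_pow_right (by norm_num) hj'
    have : (b:ℝ) ^ (2 ^ m - 2 ^ j) * (b:ℝ) ^ (2 ^ j) = (b:ℝ) ^ (2 ^ m) := by
      rw [← pow_add, Nat.sub_add_cancel hle]
    simp only [hf]
    rw [hD, mul_one_div, div_eq_iff (by positivity : ((b:ℝ) ^ 2 ^ j) ≠ 0)]
    linarith [this]
  -- d * x = q.num
  have hdx : (d:ℝ) * x = (q.num : ℝ) := by
    rw [← hq, hd, Rat.cast_def]
    field_simp
  -- the integer z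
  set N : ℕ := ∑ j ∈ Finset.range M, b ^ (2 ^ m - 2 ^ j) with hN
  set z : ℤ := q.num * (b:ℤ) ^ 2 ^ m - (d : ℤ) * N with hz
  have hzval : (z:ℝ) = (d:ℝ) * D * T := by
    have hxeq : T = x - S := by linarith [hsplit]
    have hNr : ((N:ℕ):ℝ) = D * S := hDS.symm
    rw [hxeq, hz]
    push_cast
    rw [hNr, ← hdx, hD]
    ring
  have hzpos : 0 < z := by
    have : (0:ℝ) < (z:ℝ) := by
      rw [hzval]
      positivity
    exact_mod_cast this
  have hzlt : (z:ℝ) < 1 := by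
    rw [hzval]
    have hbound : (d:ℝ) * D * T ≤ (d:ℝ) * D * (2 * (1/(b:ℝ))^(2^M)) := by
      apply mul_le_mul_of_nonneg_left htail_le (by positivity)
    have hcomp : (d:ℝ) * D * (2 * (1/(b:ℝ))^(2^M)) = 2 * d / D := by
      rw [hD, hM]
      have : (1/(b:ℝ))^(2^(m+1)) = 1 / ((b:ℝ)^(2^m) * (b:ℝ)^(2^m)) := by
        rw [div_pow, one_pow, ← pow_add]
        congr 1
        ring
      rw [this]
      field_simp
    have h2d : 2 * (d:ℝ) < D := by
      rw [hD]
      exact_mod_cast hm2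
    calc (d:ℝ) * D * T ≤ 2 * d / D := by rw [← hcomp]; exact hbound
      _ < 1 := by rw [div_lt_one hDpos]; exact h2d
  have : (1:ℝ) ≤ (z:ℝ) := by exact_mod_cast hzpos
  linarith
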